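/- The kernel characterization for the Maxwell radiation condition: over the field F = ℂ(kx, ky, kz) with kz a square root of k² − kρ² (k a nonzero parameter), the 3×3 matrix M = J₁ + (kρ²/k²)·J₂ + (1/k²)·J₅ − (i·kz/k²)·J₃ − (i·kz/k²)·J₄ has rank 2, and its right kernel (as a map on 3×1 column vectors) is spanned by the vector ∇⁻ = (i·kx, i·ky, −i·kz)ᵀ; consequently, the 3×3 solutions G of M·G = 0 are exactly the matrices of the form ∇⁻ · vᵀ for v a 3×1 vector. -/

import Mathlib

open Matrix

noncomputable section

/-- The nine matrices of the matrix basis; index `j : Fin 9` is `J_{j+1}`. -/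
def Jm {R : Type*} [CommRing R] (kx ky i : R) : Fin 9 → Matrix (Fin 3) (Fin 3) R :=
  ![!![1,0,0; 0,1,0; 0,0,0],
    !![0,0,0; 0,0,0; 0,0,1],
    !![0,0,i*kx; 0,0,i*ky; 0,0,0],
    !![0,0,0; 0,0,0; i*kx,i*ky,0],
    !![-kx^2,-(kx*ky),0; -(kx*ky),-ky^2,0; 0,0,0],
    !![0,0,0; 0,0,0; -(i*ky),i*kx,0],
    !![0,0,i*ky; 0,0,-(i*kx); 0,0,0],
    !![kx*ky,ky^2,0; -kx^2,-(kx*ky),0; 0,0,0],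
    !![0,1,0; -1,0,0; 0,0,0]]

set_option maxHeartbeats 1000000 in
/-- the matrix
`M = J₁ + (kρ²/k²)·J₂ + (1/k²)·J₅ − (i·kz/k²)·J₃ − (i·kz/k²)·J₄`
has rank `2`, and the `3×3` solutions of `M·G = 0` are exactly the outer
products `∇⁻ · vᵀ` with `∇⁻ = (i·kx, i·ky, −i·kz)ᵀ`. -/
theorem radiation_condition_kernel {F : Type*} [Field F] [CharZero F]
    (kx ky kz i : F) (hi : i ^ 2 = -1)
    (hk : kx^2 + ky^2 + kz^2 ≠ 0) (hkz : kz ≠ 0)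
    (M : Matrix (Fin 3) (Fin 3) F)
    (hM : M = Jm kx ky i 0 + ((kx^2 + ky^2)/(kx^2 + ky^2 + kz^2)) • Jm kx ky i 1
      + (1/(kx^2 + ky^2 + kz^2)) • Jm kx ky i 4
      - ((i*kz)/(kx^2 + ky^2 + kz^2)) • Jm kx ky i 2
      - ((i*kz)/(kx^2 + ky^2 + kz^2)) • Jm kx ky i 3) :
    M.rank = 2 ∧
    (∀ G : Matrix (Fin 3) (Fin 3) F,
      M * G = 0 ↔ ∃ v : Fin 3 → F, G = vecMulVec ![i*kx, i*ky, -(i*kz)] v) := by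
  have hi0 : i ≠ 0 := by
    intro h
    rw [h] at hi
    norm_num at hi
  have hMe : M = !![(ky^2+kz^2)/(kx^2+ky^2+kz^2), -(kx*ky)/(kx^2+ky^2+kz^2), kx*kz/(kx^2+ky^2+kz^2);
      -(kx*ky)/(kx^2+ky^2+kz^2), (kx^2+kz^2)/(kx^2+ky^2+kz^2), ky*kz/(kx^2+ky^2+kz^2);
      kx*kz/(kx^2+ky^2+kz^2), ky*kz/(kx^2+ky^2+kz^2), (kx^2+ky^2)/(kx^2+ky^2+kz^2)] := by
    subst hM
    ext a b
    fin_cases a <;> fin_cases b <;>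
      (first
        | rfl
        | (simp [Jm, Matrix.add_apply, Matrix.sub_apply, Matrix.smul_apply, vecHead, vecTail]
           try field_simp
           try ring_nf
           try (first
             | rfl
             | linear_combination (-(kz*kx*ky^2) - kz*kx^3 - kz^3*kx) * hi
             | linear_combination (-(kz*ky*kx^2) - kz*ky^3 - kz^3*ky) * hi
             | linear_combination (-kx) * hi
             | linear_combination (-ky) * hi)))
  set u : Fin 3 → F := ![i*kx, i*ky, -(i*kz)] with hu_def
  have hMu : M.mulVec u = 0 := by
    rw [hMe]
    ext a
    fin_cases a <;>
      (simp [hu_def, mulVec, dotProduct, Fin.sum_univ_succ]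
       field_simp
       ring)
  have key : ∀ w : Fin 3 → F, M.mulVec w = 0 ↔ ∃ c : F, w = c • u := by
    intro w
    constructor
    · intro h
      have h0 := congrFun h 0
      have h1 := congrFun h 1
      have h2 := congrFun h 2
      simp [hMe, mulVec, dotProduct, Fin.sum_univ_succ] at h0 h1 h2
      field_simp at h0 h1 h2
      have h0' : (ky^2+kz^2)*w 0 - kx*ky*w 1 + kx*kz*w 2 = 0 := by
        have hx : ((ky^2+kz^2)*w 0 - kx*ky*w 1 + kx*kz*w 2)
            * ((kx^2+ky^2+kz^2)*(kx^2+ky^2+kz^2)) = 0 := by linear_combination (kx^2+ky^2+kz^2)^2 * h0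
        exact (mul_eq_zero.mp hx).resolve_right (mul_ne_zero hk hk)
      have h1' : -(kx*ky)*w 0 + (kx^2+kz^2)*w 1 + ky*kz*w 2 = 0 := by
        have hx : (-(kx*ky)*w 0 + (kx^2+kz^2)*w 1 + ky*kz*w 2)
            * (kx^2+ky^2+kz^2) = 0 := by linear_combination (kx^2+ky^2+kz^2) * h1
        exact (mul_eq_zero.mp hx).resolve_right hk
      refine ⟨(kx * w 0 + ky * w 1 - kz * w 2)/((kx^2+ky^2+kz^2)*i), ?_⟩
      ext a
      fin_cases a <;>
        (simp [hu_def]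
         field_simp
         try (first
           | linear_combination i * h0'
           | linear_combination -(i * h0')
           | linear_combination i * h1'
           | linear_combination -(i * h1')
           | linear_combination i * h2
           | linear_combination -(i * h2)
           | linear_combination h0'
           | linear_combination -h0'
           | linear_combination h1'
           | linear_combination -h1'
           | linear_combination h2
           | linear_combination -h2))
    · rintro ⟨c, rfl⟩
      rw [Matrix.mulVec_smul, hMu, smul_zero]
  have hu0 : u ≠ 0 := by
    intro h
    have := congrFun h 2
    simp [hu_def] at this
    rcases this with h' | h' <;> simp_all
  have hker : LinearMap.ker M.mulVecLin = Submodule.span F {u} := by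
    ext w
    rw [LinearMap.mem_ker, Matrix.mulVecLin_apply, key w, Submodule.mem_span_singleton]
    exact ⟨fun ⟨c, hc⟩ => ⟨c, hc.symm⟩, fun ⟨c, hc⟩ => ⟨c, hc.symm⟩⟩
  constructor
  · have hrn := LinearMap.finrank_range_add_finrank_ker M.mulVecLin
    have hkd : Module.finrank F (LinearMap.ker M.mulVecLin) = 1 := by
      rw [hker]
      exact finrank_span_singleton hu0
    have hdim : Module.finrank F (Fin 3 → F) = 3 := by simp
    rw [hkd, hdim] at hrn
    have : M.rank = Module.finrank F (LinearMap.range M.mulVecLin) := rfl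
    omega
  · intro G
    constructor
    · intro hG
      have hcol : ∀ j, ∃ c : F, (fun a => G a j) = c • u := by
        intro j
        rw [← key]
        ext a
        have := congrFun (congrFun hG a) j
        simpa [mulVec, dotProduct, mul_apply] using this
      choose c hc using hcol
      refine ⟨c, ?_⟩
      ext a b
      have := congrFun (hc b) a
      simp only [Pi.smul_apply, smul_eq_mul] at this
      rw [vecMulVec_apply, this, mul_comm]
    · rintro ⟨v, rfl⟩
      ext a b
      have h := congrFun hMu a
      simp [mulVec, dotProduct, Fin.sum_univ_succ] at h
      simp [mul_apply, vecMulVec_apply, Fin.sum_univ_succ]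
      linear_combination v b * h
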